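/- Let R be a reduced root system with base Π, let 𝒦 = 𝒦(Π) be the cascade, and let K ∈ 𝒦. If α, β ∈ Γ^K and α + β ∈ R, then α + β = ε_K. -/

import Mathlib

open Finset Module

open scoped Classical

/-- A reduced crystallographic root system in the `k`-vector space `V`, recorded through
the finite set `roots` of roots, the coroot linear forms `corootForm α = ⟨·, α^∨⟩`, and
the integer Cartan pairing `pairInt β α = ⟨β, α^∨⟩ ∈ ℤ` (meaningful when `α, β` are roots). -/
structure RootSystemData (k V : Type*) [Field k] [CharZero k]
    [AddCommGroup V] [Module k V] where
  /-- the (finite) set of roots -/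
  roots : Finset V
  /-- `corootForm α` is the linear form `⟨·, α^∨⟩` associated to the coroot of a root `α` -/
  corootForm : V → V →ₗ[k] k
  /-- the integer `⟨β, α^∨⟩`, recorded as `pairInt β α` -/
  pairInt : V → V → ℤ
  ne_zero : ∀ α ∈ roots, α ≠ (0 : V)
  span_eq_top : Submodule.span k (roots : Set V) = ⊤
  pair_compat : ∀ α ∈ roots, ∀ β ∈ roots, ((pairInt β α : ℤ) : k) = corootForm α β
  pair_self : ∀ α ∈ roots, pairInt α α = 2
  reflect_mem : ∀ α ∈ roots, ∀ β ∈ roots, β - pairInt β α • α ∈ roots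
  reduced : ∀ α ∈ roots, ∀ c : k, c • α ∈ roots → c = 1 ∨ c = -1

namespace RootSystemData

variable {k V : Type*} [Field k] [CharZero k] [AddCommGroup V] [Module k V]
variable (P : RootSystemData k V)

/-- A base (set of simple roots) of the root system: a linearly independent set of roots
such that every root is a nonnegative or nonpositive integral combination of its elements. -/
structure IsBase (B : Finset V) : Prop where
  subset : B ⊆ P.roots
  indep : LinearIndependent k (fun b : B => (b : V))
  pos_or_neg : ∀ α ∈ P.roots,
    α ∈ AddSubmonoid.closure (B : Set V) ∨ -α ∈ AddSubmonoid.closure (B : Set V)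

/-- The positive roots `R₊` with respect to a base `B`. -/
noncomputable def posRoots (B : Finset V) : Finset V :=
  P.roots.filter fun α => α ∈ AddSubmonoid.closure (B : Set V)

/-- `R^S = R ∩ ℤS`. -/
noncomputable def rootsOf (S : Finset V) : Finset V :=
  P.roots.filter fun α => α ∈ AddSubgroup.closure (S : Set V)

/-- `R₊^S = R ∩ ℕS`. -/
noncomputable def posRootsOf (S : Finset V) : Finset V :=
  P.roots.filter fun α => α ∈ AddSubmonoid.closure (S : Set V)

/-- Two simple roots are linked in the Dynkin diagram of `S ⊆ Δ` when they can be joined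
by a chain in `S` of consecutively non-orthogonal elements. -/
def Linked (S : Finset V) : V → V → Prop :=
  Relation.ReflTransGen fun a b => a ∈ S ∧ b ∈ S ∧ P.pairInt a b ≠ 0

/-- A subset of a base is connected if its Dynkin diagram is connected (and nonempty). -/
def IsConnected (S : Finset V) : Prop :=
  S.Nonempty ∧ ∀ a ∈ S, ∀ b ∈ S, P.Linked S a b

/-- `ε` is the highest root of `R^S`: a positive root of `R^S` such that `ε - α ∈ ℕS`
for every root `α ∈ R^S`. -/
def IsHighestRoot (S : Finset V) (ε : V) : Prop :=
  ε ∈ P.posRootsOf S ∧ ∀ α ∈ P.rootsOf S, ε - α ∈ AddSubmonoid.closure (S : Set V)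

/-- The highest root `ε_S` of `R^S` (junk value `0` if it does not exist). -/
noncomputable def highestRoot (S : Finset V) : V :=
  if h : ∃ ε, P.IsHighestRoot S ε then h.choose else 0

/-- The connected component of `a` in the Dynkin diagram of `S`. -/
noncomputable def component (S : Finset V) (a : V) : Finset V :=
  S.filter fun b => P.Linked S a b

/-- The connected components of the Dynkin diagram of `S`. -/
noncomputable def components (S : Finset V) : Finset (Finset V) :=
  S.image fun a => P.component S a

/-- `{α ∈ S : ⟨α, ε_S^∨⟩ = 0}`. -/
noncomputable def zeroPart (S : Finset V) : Finset V :=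
  S.filter fun a => P.pairInt a (P.highestRoot S) = 0

/-- Fuel-based auxiliary recursion for the cascade `𝒦(S)`; for an actual root system the
recursion terminates in at most `card S` steps, so fuel `card S + 1` computes `𝒦(S)`. -/
noncomputable def cascadeAux : ℕ → Finset V → Finset (Finset V)
  | 0, _ => ∅
  | n + 1, S => (P.components S).biUnion fun C => insert C (cascadeAux n (P.zeroPart C))

/-- The cascade `𝒦(S)`, defined recursively by `𝒦(∅) = ∅`,
`𝒦(S) = 𝒦(S₁) ∪ ⋯ ∪ 𝒦(S_r)` if `S` has connected components `S₁, …, S_r`, and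
`𝒦(S) = {S} ∪ 𝒦({α ∈ S : ⟨α, ε_S^∨⟩ = 0})` if `S` is connected. -/
noncomputable def cascade (S : Finset V) : Finset (Finset V) :=
  P.cascadeAux (S.card + 1) S

/-- `Γ^K = {α ∈ R^K : ⟨α, ε_K^∨⟩ > 0}`. -/
noncomputable def gamma (K : Finset V) : Finset V :=
  (P.rootsOf K).filter fun α => 0 < P.pairInt α (P.highestRoot K)

end RootSystemData

variable {k V : Type*} [Field k] [CharZero k] [AddCommGroup V] [Module k V]
namespace RootSystemData

section Aux

variable {k V : Type*} [Field k] [CharZero k] [AddCommGroup V] [Module k V]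
variable (P : RootSystemData k V)

/-! ### Coefficient toolkit -/

lemma sum_indicator_int (S : Finset V) {a : V} (ha : a ∈ S) :
    ∑ e ∈ S, (if e = a then (1 : ℤ) else 0) • e = a := by
  rw [Finset.sum_eq_single a]
  · simp
  · intro b _ hb; simp [hb]
  · intro h; exact absurd ha h

lemma mem_closureN_iff {S : Finset V} {x : V} :
    x ∈ AddSubmonoid.closure (S : Set V) ↔ ∃ c : V → ℕ, x = ∑ a ∈ S, c a • a := by
  constructor
  · intro hx
    induction hx using AddSubmonoid.closure_induction with
    | mem a ha =>
      refine ⟨fun b => if b = a then 1 else 0, ?_⟩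
      have : ∀ b ∈ S, (if b = a then (1:ℕ) else 0) • b = (if b = a then (1:ℤ) else 0) • b := by
        intro b _; split <;> simp
      rw [Finset.sum_congr rfl this, sum_indicator_int S ha]
    | zero => exact ⟨0, by simp⟩
    | add x y _ _ hx hy =>
      obtain ⟨c, hc⟩ := hx; obtain ⟨d, hd⟩ := hy
      exact ⟨c + d, by simp [hc, hd, add_smul, Finset.sum_add_distrib]⟩
  · rintro ⟨c, rfl⟩
    exact AddSubmonoid.sum_mem _ fun a ha =>
      (AddSubmonoid.closure _).nsmul_mem (AddSubmonoid.subset_closure ha) _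

lemma mem_closureZ_iff {S : Finset V} {x : V} :
    x ∈ AddSubgroup.closure (S : Set V) ↔ ∃ c : V → ℤ, x = ∑ a ∈ S, c a • a := by
  constructor
  · intro hx
    induction hx using AddSubgroup.closure_induction with
    | mem a ha =>
      exact ⟨fun b => if b = a then 1 else 0, (sum_indicator_int S ha).symm⟩
    | zero => exact ⟨0, by simp⟩
    | add x y _ _ hx hy =>
      obtain ⟨c, hc⟩ := hx; obtain ⟨d, hd⟩ := hy
      exact ⟨c + d, by simp [hc, hd, add_smul, Finset.sum_add_distrib]⟩
    | neg x _ hx =>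
      obtain ⟨c, hc⟩ := hx
      exact ⟨-c, by simp [hc, neg_smul, Finset.sum_neg_distrib]⟩
  · rintro ⟨c, rfl⟩
    exact AddSubgroup.sum_mem _ fun a ha =>
      AddSubgroup.zsmul_mem _ (AddSubgroup.subset_closure ha) _

noncomputable def htK (K : Finset V) (x : V) : ℕ :=
  if h : ∃ c : V → ℕ, x = ∑ a ∈ K, c a • a then ∑ a ∈ K, h.choose a else 0

section Base

variable {k V : Type*} [Field k] [CharZero k] [AddCommGroup V] [Module k V]
variable {P : RootSystemData k V} {Δ : Finset V} (hbase : P.IsBase Δ)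

include hbase

lemma coeff_zero {S : Finset V} (hS : S ⊆ Δ) (c : V → k)
    (h : ∑ a ∈ S, c a • a = 0) : ∀ a ∈ S, c a = 0 := by
  have hind := hbase.indep
  rw [linearIndependent_iff'] at hind
  have key : ∑ i ∈ Δ.attach, (if (i : V) ∈ S then c i else 0) • (i : V) = 0 := by
    rw [Finset.sum_attach Δ (fun a => (if a ∈ S then c a else 0) • a)]
    have : ∀ a ∈ Δ, (if a ∈ S then c a else 0) • a = if a ∈ S then c a • a else 0 := by
      intro a _; split <;> simp
    have hfil : Δ.filter (· ∈ S) = S := by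
      ext x; simp only [Finset.mem_filter, and_iff_right_iff_imp]
      exact fun h => hS h
    rw [Finset.sum_congr rfl this, ← Finset.sum_filter, hfil, h]
  intro a ha
  have := hind Δ.attach _ key ⟨a, hS ha⟩ (Finset.mem_attach _ _)
  simpa [ha] using this

lemma coeff_int_eq {S : Finset V} (hS : S ⊆ Δ) (c d : V → ℤ)
    (h : ∑ a ∈ S, c a • a = ∑ a ∈ S, d a • a) : ∀ a ∈ S, c a = d a := by
  have h2 : ∑ a ∈ S, ((c a - d a : ℤ) : k) • a = 0 := by
    have : ∀ a ∈ S, ((c a - d a : ℤ) : k) • a = c a • a - d a • a := by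
      intro a _
      rw [Int.cast_smul_eq_zsmul, sub_smul]
    rw [Finset.sum_congr rfl this, Finset.sum_sub_distrib, h, sub_self]
  intro a ha
  have := coeff_zero hbase hS _ h2 a ha
  have : ((c a - d a : ℤ) : k) = 0 := this
  have : (c a - d a : ℤ) = 0 := by exact_mod_cast this
  omega

lemma coeff_nat_eq {S : Finset V} (hS : S ⊆ Δ) (c d : V → ℕ)
    (h : ∑ a ∈ S, c a • a = ∑ a ∈ S, d a • a) : ∀ a ∈ S, c a = d a := by
  have h' : ∑ a ∈ S, ((c a : ℤ)) • a = ∑ a ∈ S, ((d a : ℤ)) • a := by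
    simpa [natCast_zsmul] using h
  intro a ha
  have := coeff_int_eq hbase hS _ _ h' a ha
  exact_mod_cast this

lemma eq_zero_of_mem_neg_mem {S : Finset V} (hS : S ⊆ Δ) {x : V}
    (h1 : x ∈ AddSubmonoid.closure (S : Set V))
    (h2 : -x ∈ AddSubmonoid.closure (S : Set V)) : x = 0 := by
  obtain ⟨c, hc⟩ := mem_closureN_iff.mp h1
  obtain ⟨d, hd⟩ := mem_closureN_iff.mp h2
  have hsum : ∑ a ∈ S, (c + d) a • a = ∑ a ∈ S, (0 : V → ℕ) a • a := by
    simp only [Pi.add_apply, add_smul, Finset.sum_add_distrib, Pi.zero_apply, zero_smul,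
      Finset.sum_const_zero]
    rw [← hc, ← hd, add_neg_cancel]
  have hz := coeff_nat_eq hbase hS _ _ hsum
  have : ∀ a ∈ S, c a = 0 := by intro a ha; have := hz a ha; simp at this; omega
  rw [hc, Finset.sum_congr rfl (fun a ha => by rw [this a ha])]
  simp

lemma htK_eq {K : Finset V} (hS : K ⊆ Δ) {x : V} {c : V → ℕ}
    (hx : x = ∑ a ∈ K, c a • a) : htK K x = ∑ a ∈ K, c a := by
  have h : ∃ c : V → ℕ, x = ∑ a ∈ K, c a • a := ⟨c, hx⟩
  rw [htK, dif_pos h]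
  have hs := h.choose_spec
  have heq := coeff_nat_eq hbase hS h.choose c (by rw [← hs, ← hx])
  exact Finset.sum_congr rfl fun a ha => heq a ha

lemma eq_of_sub_mem_of_ht_le {K : Finset V} (hS : K ⊆ Δ) {x y : V}
    (hx : x ∈ AddSubmonoid.closure (K : Set V))
    (hd : y - x ∈ AddSubmonoid.closure (K : Set V))
    (hht : htK K y ≤ htK K x) : y = x := by
  obtain ⟨c, hc⟩ := mem_closureN_iff.mp hx
  obtain ⟨d, hdc⟩ := mem_closureN_iff.mp hd
  have hy : y = ∑ a ∈ K, (c + d) a • a := by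
    have : y = x + (y - x) := by abel
    rw [this, hdc, hc]
    simp [add_smul, Finset.sum_add_distrib]
  have h1 := htK_eq hbase hS hc
  have h2 := htK_eq hbase hS hy
  have hd0 : ∑ a ∈ K, d a = 0 := by
    rw [h1] at hht; rw [h2] at hht
    simp only [Pi.add_apply, Finset.sum_add_distrib] at hht
    omega
  have : ∀ a ∈ K, d a = 0 := by
    intro a ha
    exact (Finset.sum_eq_zero_iff.mp hd0) a ha
  have : y - x = 0 := by
    rw [hdc, Finset.sum_congr rfl (fun a ha => by rw [this a ha])]; simp
  have := sub_eq_zero.mp this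
  exact this

end Base
section Refl

variable {k V : Type*} [Field k] [CharZero k] [AddCommGroup V] [Module k V]
variable (P : RootSystemData k V)

/-- The reflection in the root `y`, as a linear endomorphism. -/
noncomputable def refl (y : V) : Module.End k V :=
  LinearMap.id - (P.corootForm y).smulRight y

lemma refl_apply (y z : V) : P.refl y z = z - P.corootForm y z • y := by
  simp [refl, LinearMap.sub_apply, LinearMap.smulRight_apply]

variable {P}

lemma corootForm_self {y : V} (hy : y ∈ P.roots) : P.corootForm y y = 2 := by
  have h := P.pair_compat y hy y hy
  rw [P.pair_self y hy] at h
  exact_mod_cast h.symm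

lemma neg_mem {y : V} (hy : y ∈ P.roots) : -y ∈ P.roots := by
  have := P.reflect_mem y hy y hy
  rw [P.pair_self y hy] at this
  convert this using 1
  rw [two_zsmul]; abel

lemma refl_refl {y : V} (hy : y ∈ P.roots) (z : V) : P.refl y (P.refl y z) = z := by
  simp only [refl_apply, map_sub, map_smul, corootForm_self hy, smul_eq_mul]
  module

lemma refl_mul_self {y : V} (hy : y ∈ P.roots) : P.refl y * P.refl y = 1 := by
  ext z; exact refl_refl hy z

lemma refl_mem {y z : V} (hy : y ∈ P.roots) (hz : z ∈ P.roots) :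
    P.refl y z ∈ P.roots := by
  rw [refl_apply, ← P.pair_compat y hy z hz, Int.cast_smul_eq_zsmul]
  exact P.reflect_mem y hy z hz

lemma pow_mem_roots {g : Module.End k V} (hg : ∀ z ∈ P.roots, g z ∈ P.roots) :
    ∀ (n : ℕ), ∀ z ∈ P.roots, (g ^ n) z ∈ P.roots := by
  intro n
  induction n with
  | zero => intro z hz; simpa using hz
  | succ n ih =>
    intro z hz
    rw [pow_succ, Module.End.mul_apply]
    exact ih _ (hg z hz)

lemma exists_pow_refl_eq_one {x y : V} (hx : x ∈ P.roots) (hy : y ∈ P.roots) :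
    ∃ N : ℕ, 0 < N ∧ (P.refl x * P.refl y) ^ N = 1 := by
  classical
  set g : Module.End k V := P.refl x * P.refl y with hgdef
  set h : Module.End k V := P.refl y * P.refl x with hhdef
  have hmaps : ∀ z ∈ P.roots, g z ∈ P.roots := fun z hz =>
    refl_mem hx (refl_mem hy hz)
  have hinv : ∀ n : ℕ, h ^ n * g ^ n = 1 := by
    intro n
    induction n with
    | zero => simp
    | succ n ih =>
      rw [pow_succ h, pow_succ' g, mul_assoc, ← mul_assoc h, hhdef, hgdef]
      have : P.refl y * P.refl x * (P.refl x * P.refl y) = 1 := by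
        rw [mul_assoc, ← mul_assoc (P.refl x), refl_mul_self hx, one_mul, refl_mul_self hy]
      rw [this, one_mul, ih]
  have hginj : ∀ n : ℕ, Function.Injective ⇑(g ^ n) := by
    intro n
    have : Function.LeftInverse ⇑(h ^ n) ⇑(g ^ n) := by
      intro z
      have := congrArg (fun f : Module.End k V => f z) (hinv n)
      simpa using this
    exact this.injective
  -- pigeonhole on the restriction to the (finite) set of roots
  let F : ℕ → ({ z // z ∈ P.roots } → { z // z ∈ P.roots }) := fun n z =>
    ⟨(g ^ n) z, pow_mem_roots hmaps n z z.2⟩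
  obtain ⟨m, n, hmn, hFeq⟩ := Finite.exists_ne_map_eq_of_infinite F
  wlog hlt : n < m generalizing m n
  · exact this n m hmn.symm hFeq.symm (by omega)
  refine ⟨m - n, by omega, ?_⟩
  have hroots : ∀ z ∈ P.roots, (g ^ (m - n)) z = z := by
    intro z hz
    have h1 : (g ^ n) ((g ^ (m - n)) z) = (g ^ n) z := by
      have : (g ^ n) * (g ^ (m - n)) = g ^ m := by rw [← pow_add]; congr 1; omega
      have h2 := congrArg (fun f : Module.End k V => f z) this
      simp only [Module.End.mul_apply] at h2
      rw [h2]
      have := congrFun hFeq ⟨z, hz⟩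
      simpa [F, Subtype.ext_iff] using this
    exact hginj n h1
  apply LinearMap.ext_on P.span_eq_top
  intro z hz
  simpa using hroots z hz

end Refl
section Classification

variable {k V : Type*} [Field k] [CharZero k] [AddCommGroup V] [Module k V]
variable {P : RootSystemData k V}

/-- The Chebyshev-like integer sequence governing powers of a product of two reflections. -/
def Useq (t : ℤ) : ℕ → ℤ
  | 0 => 0
  | 1 => 1
  | (n+2) => t * Useq t (n+1) - Useq t n

lemma Useq_zero (t : ℤ) : Useq t 0 = 0 := rfl
lemma Useq_one (t : ℤ) : Useq t 1 = 1 := rfl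
lemma Useq_rec (t : ℤ) (n : ℕ) : Useq t (n+2) = t * Useq t (n+1) - Useq t n := rfl

lemma Useq_abs {t : ℤ} (ht : 2 ≤ |t|) : ∀ n, |Useq t n| + 1 ≤ |Useq t (n+1)| := by
  intro n
  induction n with
  | zero => simp [Useq_zero, Useq_one]
  | succ n ih =>
    have h1 : |t * Useq t (n+1)| - |Useq t n| ≤ |Useq t (n+2)| := by
      rw [Useq_rec]; exact abs_sub_abs_le_abs_sub _ _
    have h2 : |t * Useq t (n+1)| = |t| * |Useq t (n+1)| := abs_mul _ _
    nlinarith [abs_nonneg (Useq t (n+1)), abs_nonneg (Useq t n)]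

lemma Useq_ne_zero {t : ℤ} (ht : 2 ≤ |t|) (n : ℕ) : Useq t (n+1) ≠ 0 := by
  have h : ∀ m, 1 ≤ |Useq t (m+1)| := by
    intro m
    induction m with
    | zero => simp [Useq_one]
    | succ m ih => have := Useq_abs ht (m+1); omega
  have := h n
  intro h0; rw [h0] at this; simp at this

lemma indep_of_ne {x y : V} (hx : x ∈ P.roots) (hy : y ∈ P.roots)
    (h1 : x ≠ y) (h2 : x ≠ -y) : ∀ s t : k, s • x + t • y = 0 → s = 0 ∧ t = 0 := by
  intro s t h
  by_cases ht : t = 0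
  · subst ht
    simp only [zero_smul, add_zero, smul_eq_zero] at h
    rcases h with h | h
    · exact ⟨h, rfl⟩
    · exact absurd h (P.ne_zero x hx)
  · exfalso
    have h3 : t • y = (-s) • x := by
      rw [neg_smul]; exact eq_neg_of_add_eq_zero_right h
    have hyx : y = (-s/t) • x := by
      have h4 : (t⁻¹ * t) • y = (t⁻¹ * -s) • x := by rw [mul_smul, mul_smul, h3]
      rw [inv_mul_cancel₀ ht, one_smul] at h4
      rw [h4]; congr 1; field_simp
    have := P.reduced x hx (-s/t) (by rw [← hyx]; exact hy)
    rcases this with hc | hc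
    · rw [hc, one_smul] at hyx; exact h1 hyx.symm
    · rw [hc, neg_one_smul] at hyx
      exact h2 (by rw [hyx, neg_neg])

lemma pairInt_classification {x y : V} (hx : x ∈ P.roots) (hy : y ∈ P.roots)
    (hind : ∀ s t : k, s • x + t • y = 0 → s = 0 ∧ t = 0) :
    (P.pairInt x y = 0 ∧ P.pairInt y x = 0) ∨
      (1 ≤ P.pairInt x y * P.pairInt y x ∧ P.pairInt x y * P.pairInt y x ≤ 3) := by
  classical
  set u := P.pairInt x y with hu
  set v := P.pairInt y x with hv
  set t : ℤ := u * v - 2 with htdef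
  set g : Module.End k V := P.refl x * P.refl y with hgdef
  have hcx : P.corootForm x y = (v : k) := (P.pair_compat x hx y hy).symm
  have hcy : P.corootForm y x = (u : k) := (P.pair_compat y hy x hx).symm
  have hgx : g x = ((u * v - 1 : ℤ) : k) • x - ((u : ℤ) : k) • y := by
    simp only [hgdef, Module.End.mul_apply, refl_apply, map_sub, map_smul, hcx, hcy,
      corootForm_self hx, smul_eq_mul]
    push_cast
    module
  have hgy : g y = ((v : ℤ) : k) • x - y := by
    simp only [hgdef, Module.End.mul_apply, refl_apply, map_sub, map_smul, hcx, hcy,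
      corootForm_self hy, smul_eq_mul]
    push_cast
    module
  have hqx : g (g x) = ((t : ℤ) : k) • g x - x := by
    rw [hgx, map_sub, map_smul, map_smul, hgx, hgy, htdef]
    push_cast
    module
  have hqy : g (g y) = ((t : ℤ) : k) • g y - y := by
    rw [hgy, map_sub, map_smul, hgy, hgx, htdef]
    push_cast
    module
  have hpow : ∀ z : V, g (g z) = ((t : ℤ) : k) • g z - z →
      ∀ m : ℕ, (g ^ (m+1)) z = ((Useq t (m+1) : ℤ) : k) • g z - ((Useq t m : ℤ) : k) • z := by
    intro z hq m
    induction m with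
    | zero => simp [Useq_zero, Useq_one]
    | succ m ih =>
      have hstep : (g ^ (m+2)) z = g ((g ^ (m+1)) z) := by
        rw [pow_succ', Module.End.mul_apply]
      rw [hstep, ih, map_sub, map_smul, map_smul, hq, Useq_rec]
      push_cast
      module
  obtain ⟨N, hNpos, hN⟩ := exists_pow_refl_eq_one hx hy
  obtain ⟨n, rfl⟩ : ∃ n, N = n + 1 := ⟨N - 1, by omega⟩
  have hGx : (g ^ (n+1)) x = x := by rw [hN]; simp
  have hGy : (g ^ (n+1)) y = y := by rw [hN]; simp
  set A : ℤ := Useq t (n+1) with hA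
  set B : ℤ := Useq t n with hB
  have ex : ((A : ℤ) : k) • g x - ((B : ℤ) : k) • x = x := by rw [← hpow x hqx n, hGx]
  have ey : ((A : ℤ) : k) • g y - ((B : ℤ) : k) • y = y := by rw [← hpow y hqy n, hGy]
  rw [hgx] at ex
  rw [hgy] at ey
  have cx : ((A * (u*v-1) - B - 1 : ℤ) : k) • x + ((-(A*u) : ℤ) : k) • y = 0 := by
    push_cast
    push_cast at ex
    linear_combination (norm := module) ex
  have cy : ((A * v : ℤ) : k) • x + ((-A - B - 1 : ℤ) : k) • y = 0 := by
    push_cast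
    push_cast at ey
    linear_combination (norm := module) ey
  have hAu : A * u = 0 := by
    have := (hind _ _ cx).2
    exact_mod_cast neg_eq_zero.mp (by exact_mod_cast this)
  have hAv : A * v = 0 := by
    have := (hind _ _ cy).1
    exact_mod_cast this
  by_cases hA0 : A = 0
  · right
    have ht : |t| ≤ 1 := by
      by_contra hcon
      exact Useq_ne_zero (by omega) n hA0
    have := abs_le.mp ht
    constructor <;> omega
  · left
    constructor
    · exact (mul_eq_zero.mp hAu).resolve_left hA0
    · exact (mul_eq_zero.mp hAv).resolve_left hA0

end Classification
section AddSub

variable {k V : Type*} [Field k] [CharZero k] [AddCommGroup V] [Module k V]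
variable {P : RootSystemData k V}

lemma pairInt_neg_self {x : V} (hx : x ∈ P.roots) :
    P.pairInt x (-x) = 0 ∨ P.pairInt x (-x) = -2 := by
  have hnx := neg_mem hx
  set p := P.pairInt x (-x) with hp
  have hc : P.corootForm (-x) x = (p : k) := (P.pair_compat (-x) hnx x hx).symm
  have h1 : P.refl (-x) x = (1 + (p : k)) • x := by
    rw [refl_apply, hc]; module
  have h2 : P.refl (-x) (P.refl (-x) x) = x := refl_refl hnx x
  rw [h1, map_smul, h1, smul_smul] at h2
  have h3 : ((1 + (p : k)) * (1 + (p : k)) - 1) • x = 0 := by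
    rw [sub_smul, h2, one_smul, sub_self]
  have h4 : (1 + (p : k)) * (1 + (p : k)) - 1 = 0 :=
    ((smul_eq_zero.mp h3).resolve_right (P.ne_zero x hx))
  have h5 : ((p * (p + 2) : ℤ) : k) = 0 := by push_cast; linear_combination h4
  have h6 : (p * (p + 2) : ℤ) = 0 := by exact_mod_cast h5
  rcases mul_eq_zero.mp h6 with h | h
  · exact Or.inl h
  · exact Or.inr (by omega)

lemma sub_mem_of_pairInt_pos {x y : V} (hx : x ∈ P.roots) (hy : y ∈ P.roots)
    (hpos : 0 < P.pairInt x y) (hne : x ≠ y) : x - y ∈ P.roots := by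
  by_cases hney : x = -y
  · exfalso
    have hyx : y = -x := by rw [hney, neg_neg]
    rw [hyx] at hpos
    rcases pairInt_neg_self hx with h | h <;> omega
  · have hind := indep_of_ne hx hy hne hney
    rcases pairInt_classification hx hy hind with ⟨h1, _⟩ | ⟨h1, h2⟩
    · omega
    · have hvpos : 0 < P.pairInt y x := by
        by_contra hcon
        push_neg at hcon
        have : P.pairInt x y * P.pairInt y x ≤ 0 :=
          mul_nonpos_of_nonneg_of_nonpos (by omega) hcon
        omega
      by_cases hu1 : P.pairInt x y = 1
      · have := P.reflect_mem y hy x hx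
        rw [hu1] at this; simpa using this
      · have hv1 : P.pairInt y x = 1 := by
          by_contra hcon
          have hv2 : 2 ≤ P.pairInt y x := by omega
          have hu2 : 2 ≤ P.pairInt x y := by omega
          nlinarith
        have := P.reflect_mem x hx y hy
        rw [hv1] at this
        simp only [one_smul] at this
        have := neg_mem this
        rw [neg_sub] at this; exact this

lemma add_mem_of_pairInt_neg {x y : V} (hx : x ∈ P.roots) (hy : y ∈ P.roots)
    (hneg : P.pairInt x y < 0) (hne : x ≠ -y) : x + y ∈ P.roots := by
  by_cases heq : x = y
  · exfalso; rw [heq, P.pair_self y hy] at hneg; omega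
  · have hind := indep_of_ne hx hy heq hne
    rcases pairInt_classification hx hy hind with ⟨h1, _⟩ | ⟨h1, h2⟩
    · omega
    · have hvneg : P.pairInt y x < 0 := by
        by_contra hcon
        push_neg at hcon
        have : P.pairInt x y * P.pairInt y x ≤ 0 :=
          mul_nonpos_of_nonpos_of_nonneg (by omega) hcon
        omega
      by_cases hu1 : P.pairInt x y = -1
      · have := P.reflect_mem y hy x hx
        rw [hu1] at this
        simpa [sub_neg_eq_add] using this
      · have hv1 : P.pairInt y x = -1 := by
          by_contra hcon
          have hv2 : P.pairInt y x ≤ -2 := by omega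
          have hu2 : P.pairInt x y ≤ -2 := by omega
          nlinarith
        have := P.reflect_mem x hx y hy
        rw [hv1] at this
        simp only [neg_smul, one_smul, sub_neg_eq_add] at this
        rw [add_comm]; exact this

lemma pairInt_zero_symm {x y : V} (hx : x ∈ P.roots) (hy : y ∈ P.roots)
    (hne1 : x ≠ y) (hne2 : x ≠ -y) (h : P.pairInt x y = 0) : P.pairInt y x = 0 := by
  rcases pairInt_classification hx hy (indep_of_ne hx hy hne1 hne2) with ⟨_, h2⟩ | ⟨h1, _⟩
  · exact h2
  · rw [h, zero_mul] at h1; omega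

lemma pairInt_nonneg_symm {x y : V} (hx : x ∈ P.roots) (hy : y ∈ P.roots)
    (hne1 : x ≠ y) (hne2 : x ≠ -y) (h : 0 ≤ P.pairInt x y) : 0 ≤ P.pairInt y x := by
  rcases pairInt_classification hx hy (indep_of_ne hx hy hne1 hne2) with ⟨_, h2⟩ | ⟨h1, _⟩
  · omega
  · by_contra hcon
    push_neg at hcon
    have : P.pairInt x y * P.pairInt y x ≤ 0 :=
      mul_nonpos_of_nonneg_of_nonpos h (by omega)
    omega

end AddSub
section BaseFacts

variable {k V : Type*} [Field k] [CharZero k] [AddCommGroup V] [Module k V]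
variable {P : RootSystemData k V} {Δ : Finset V} (hbase : P.IsBase Δ)

include hbase

lemma ne_neg_of_base {a b : V} (ha : a ∈ Δ) (hb : b ∈ Δ) : a ≠ -b := by
  intro h
  have hab : a + b = 0 := by rw [h]; simp
  by_cases heq : a = b
  · subst heq
    have h2 : (2 : k) • a = 0 := by
      rw [two_smul]; exact_mod_cast hab
    rcases smul_eq_zero.mp h2 with h | h
    · exact two_ne_zero h
    · exact P.ne_zero a (hbase.subset ha) h
  · have hS : ({a, b} : Finset V) ⊆ Δ :=
      Finset.insert_subset ha (Finset.singleton_subset_iff.mpr hb)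
    have hsum : ∑ x ∈ ({a, b} : Finset V), (fun _ : V => (1 : k)) x • x = 0 := by
      rw [Finset.sum_pair heq]; simpa using hab
    have := coeff_zero hbase hS _ hsum a (by simp)
    simpa using this

lemma sub_simple_not_pos {a b : V} (ha : a ∈ Δ) (hb : b ∈ Δ) (hne : a ≠ b) :
    a - b ∉ AddSubmonoid.closure (Δ : Set V) := by
  intro hmem
  obtain ⟨c, hc⟩ := mem_closureN_iff.mp hmem
  have hrep : ∑ e ∈ Δ, ((if e = a then (1 : ℤ) else 0) - (if e = b then 1 else 0)) • e
      = a - b := by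
    simp only [sub_smul, Finset.sum_sub_distrib, sum_indicator_int Δ ha,
      sum_indicator_int Δ hb]
  have hc' : ∑ e ∈ Δ, ((c e : ℤ)) • e = a - b := by
    have : ∑ e ∈ Δ, ((c e : ℤ)) • e = ∑ e ∈ Δ, c e • e := by
      apply Finset.sum_congr rfl; intro e _; exact natCast_zsmul e (c e)
    rw [this, ← hc]
  have heq := coeff_int_eq hbase (Finset.Subset.refl Δ) _ _ (hrep.trans hc'.symm) b hb
  rw [if_neg (Ne.symm hne), if_pos rfl] at heq
  omega

lemma pairInt_simple_nonpos {a b : V} (ha : a ∈ Δ) (hb : b ∈ Δ) (hne : a ≠ b) :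
    P.pairInt a b ≤ 0 := by
  by_contra hcon
  push_neg at hcon
  have hsub := sub_mem_of_pairInt_pos (hbase.subset ha) (hbase.subset hb) hcon hne
  rcases hbase.pos_or_neg _ hsub with hp | hn
  · exact sub_simple_not_pos hbase ha hb hne hp
  · rw [neg_sub] at hn
    exact sub_simple_not_pos hbase hb ha (Ne.symm hne) hn

lemma mem_closureN_of_closureZ {S : Finset V} (hS : S ⊆ Δ) {x : V}
    (hZ : x ∈ AddSubgroup.closure (S : Set V))
    (hN : x ∈ AddSubmonoid.closure (Δ : Set V)) :
    x ∈ AddSubmonoid.closure (S : Set V) := by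
  obtain ⟨e, he⟩ := mem_closureZ_iff.mp hZ
  obtain ⟨c, hc⟩ := mem_closureN_iff.mp hN
  have hext : ∑ y ∈ Δ, (if y ∈ S then e y else 0) • y = x := by
    calc ∑ y ∈ Δ, (if y ∈ S then e y else 0) • y
        = ∑ y ∈ S, (if y ∈ S then e y else 0) • y :=
          (Finset.sum_subset hS (by intro y _ hy; simp [hy])).symm
      _ = ∑ y ∈ S, e y • y := Finset.sum_congr rfl (fun y hy => by rw [if_pos hy])
      _ = x := he.symm
  have hc' : ∑ y ∈ Δ, ((c y : ℤ)) • y = x := by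
    have : ∑ y ∈ Δ, ((c y : ℤ)) • y = ∑ y ∈ Δ, c y • y := by
      apply Finset.sum_congr rfl; intro y _; exact natCast_zsmul y (c y)
    rw [this, ← hc]
  have heq := coeff_int_eq hbase (Finset.Subset.refl Δ) _ _ (hc'.trans hext.symm)
  refine mem_closureN_iff.mpr ⟨fun y => (e y).toNat, ?_⟩
  rw [he]
  apply Finset.sum_congr rfl
  intro y hy
  have h1 := heq y (hS hy)
  rw [if_pos hy] at h1
  have h2 : 0 ≤ e y := by omega
  have h3 : ((e y).toNat : ℤ) • y = (e y).toNat • y := natCast_zsmul y _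
  rw [← h3, Int.toNat_of_nonneg h2]

lemma posneg_of_rootsOf {S : Finset V} (hS : S ⊆ Δ) {γ : V} (hγ : γ ∈ P.rootsOf S) :
    γ ∈ AddSubmonoid.closure (S : Set V) ∨ -γ ∈ AddSubmonoid.closure (S : Set V) := by
  obtain ⟨hroot, hZ⟩ := Finset.mem_filter.mp hγ
  rcases hbase.pos_or_neg γ hroot with hp | hn
  · exact Or.inl (mem_closureN_of_closureZ hbase hS hZ hp)
  · exact Or.inr (mem_closureN_of_closureZ hbase hS
      (AddSubgroup.neg_mem _ hZ) hn)

end BaseFacts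
section Highest

variable {k V : Type*} [Field k] [CharZero k] [AddCommGroup V] [Module k V]
variable {P : RootSystemData k V} {Δ K : Finset V} (hbase : P.IsBase Δ)

lemma closureN_le_closureZ {S : Finset V} {x : V}
    (h : x ∈ AddSubmonoid.closure (S : Set V)) : x ∈ AddSubgroup.closure (S : Set V) :=
  (AddSubmonoid.closure_le.mpr
    (fun y hy => AddSubgroup.subset_closure hy :
      (S : Set V) ⊆ ((AddSubgroup.closure (S : Set V)).toAddSubmonoid : Set V))) h

include hbase

lemma pairInt_sum_formula (hK1 : K ⊆ Δ) {x : V} (hx : x ∈ P.roots) {ε : V}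
    (hε : ε ∈ P.roots) {c : V → ℕ} (hc : ε = ∑ a ∈ K, c a • a) :
    P.pairInt ε x = ∑ e ∈ K, (c e : ℤ) * P.pairInt e x := by
  have hk : ((P.pairInt ε x : ℤ) : k) = ((∑ e ∈ K, (c e : ℤ) * P.pairInt e x : ℤ) : k) := by
    rw [P.pair_compat x hx ε hε, hc, map_sum]
    push_cast
    apply Finset.sum_congr rfl
    intro e he
    rw [map_nsmul, ← P.pair_compat x hx e (hbase.subset (hK1 he))]
    push_cast
    ring
  exact_mod_cast hk

lemma max_pair_nonneg (hK1 : K ⊆ Δ) {ε : V} (hε : ε ∈ P.posRootsOf K)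
    (hmax : ∀ γ ∈ P.posRootsOf K, γ - ε ∈ AddSubmonoid.closure (K : Set V) → γ = ε) :
    ∀ a ∈ K, 0 ≤ P.pairInt ε a := by
  intro a ha
  obtain ⟨hεr, hεN⟩ := Finset.mem_filter.mp hε
  have har : a ∈ P.roots := hbase.subset (hK1 ha)
  have haN : a ∈ AddSubmonoid.closure (K : Set V) := AddSubmonoid.subset_closure ha
  by_contra hcon
  push_neg at hcon
  have hne : ε ≠ -a := by
    intro h
    have : -ε ∈ AddSubmonoid.closure (K : Set V) := by rw [neg_eq_iff_eq_neg.mpr h]; exact haN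
    exact P.ne_zero ε hεr (eq_zero_of_mem_neg_mem hbase hK1 hεN this)
  have hadd := add_mem_of_pairInt_neg hεr har hcon hne
  have haddN : ε + a ∈ AddSubmonoid.closure (K : Set V) := AddSubmonoid.add_mem _ hεN haN
  have haddpos : ε + a ∈ P.posRootsOf K := Finset.mem_filter.mpr ⟨hadd, haddN⟩
  have h0 : ε + a = ε := hmax _ haddpos (by simpa using haN)
  exact P.ne_zero a har (by
    have := h0
    rwa [add_eq_left] at this)

lemma max_support (hK1 : K ⊆ Δ)
    (hconn : ∀ T ⊆ K, T.Nonempty → (∀ b ∈ T, ∀ a ∈ K \ T, P.pairInt b a = 0) → T = K)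
    {ε : V} (hε : ε ∈ P.posRootsOf K)
    (hmax : ∀ γ ∈ P.posRootsOf K, γ - ε ∈ AddSubmonoid.closure (K : Set V) → γ = ε)
    {c : V → ℕ} (hc : ε = ∑ a ∈ K, c a • a) :
    ∀ a ∈ K, c a ≠ 0 := by
  classical
  obtain ⟨hεr, hεN⟩ := Finset.mem_filter.mp hε
  set T := K.filter (fun a => c a ≠ 0) with hT
  have hTK : T ⊆ K := Finset.filter_subset _ _
  have hTne : T.Nonempty := by
    rw [Finset.filter_nonempty_iff]
    by_contra hcon
    push_neg at hcon
    have : ε = 0 := by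
      rw [hc]
      apply Finset.sum_eq_zero
      intro a ha
      rw [hcon a ha, zero_smul]
    exact P.ne_zero ε hεr this
  have hcross : ∀ b ∈ T, ∀ a ∈ K \ T, P.pairInt b a = 0 := by
    intro b hb a ha
    obtain ⟨haK, haT⟩ := Finset.mem_sdiff.mp ha
    have hca : c a = 0 := by
      by_contra h
      exact haT (Finset.mem_filter.mpr ⟨haK, h⟩)
    have har : a ∈ P.roots := hbase.subset (hK1 haK)
    have hterm : ∀ e ∈ K, (c e : ℤ) * P.pairInt e a ≤ 0 := by
      intro e he
      by_cases hea : e = a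
      · subst hea; rw [hca]; simp
      · have := pairInt_simple_nonpos hbase (hK1 he) (hK1 haK) hea
        exact mul_nonpos_of_nonneg_of_nonpos (by positivity) this
    have hsum : ∑ e ∈ K, (c e : ℤ) * P.pairInt e a = P.pairInt ε a :=
      (pairInt_sum_formula hbase hK1 har hεr hc).symm
    have hge : 0 ≤ ∑ e ∈ K, (c e : ℤ) * P.pairInt e a := by
      rw [hsum]; exact max_pair_nonneg hbase hK1 hε hmax a haK
    have hle : ∑ e ∈ K, (c e : ℤ) * P.pairInt e a ≤ 0 :=
      Finset.sum_nonpos hterm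
    have hall := (Finset.sum_eq_zero_iff_of_nonpos hterm).mp (le_antisymm hle hge)
    have hbK := hTK hb
    have := hall b hbK
    obtain ⟨_, hcb⟩ := Finset.mem_filter.mp hb
    rcases mul_eq_zero.mp this with h | h
    · exact absurd (by exact_mod_cast h) hcb
    · exact h
  have := hconn T hTK hTne hcross
  intro a ha
  have : a ∈ T := by rw [this]; exact ha
  exact (Finset.mem_filter.mp this).2

lemma max_unique (hK1 : K ⊆ Δ)
    (hconn : ∀ T ⊆ K, T.Nonempty → (∀ b ∈ T, ∀ a ∈ K \ T, P.pairInt b a = 0) → T = K)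
    {β β' : V} (hβ : β ∈ P.posRootsOf K)
    (hmaxβ : ∀ γ ∈ P.posRootsOf K, γ - β ∈ AddSubmonoid.closure (K : Set V) → γ = β)
    (hβ' : β' ∈ P.posRootsOf K)
    (hmaxβ' : ∀ γ ∈ P.posRootsOf K, γ - β' ∈ AddSubmonoid.closure (K : Set V) → γ = β') :
    β = β' := by
  by_contra hne
  obtain ⟨hβr, hβN⟩ := Finset.mem_filter.mp hβ
  obtain ⟨hβ'r, hβ'N⟩ := Finset.mem_filter.mp hβ'
  obtain ⟨c, hc⟩ := mem_closureN_iff.mp hβN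
  obtain ⟨c', hc'⟩ := mem_closureN_iff.mp hβ'N
  have hsupp := max_support hbase hK1 hconn hβ hmaxβ hc
  -- each ⟨e, β'^∨⟩ is nonnegative
  have hterm : ∀ e ∈ K, 0 ≤ P.pairInt e β' := by
    intro e he
    have her : e ∈ P.roots := hbase.subset (hK1 he)
    have hnonneg := max_pair_nonneg hbase hK1 hβ' hmaxβ' e he
    by_cases h1 : β' = e
    · rw [← h1]; rw [P.pair_self β' hβ'r]; omega
    · have h2 : β' ≠ -e := by
        intro h
        have heN : e ∈ AddSubmonoid.closure (K : Set V) := AddSubmonoid.subset_closure he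
        have : -e ∈ AddSubmonoid.closure (K : Set V) := by rw [← h]; exact hβ'N
        exact P.ne_zero e her (eq_zero_of_mem_neg_mem hbase hK1 heN this)
      exact pairInt_nonneg_symm hβ'r her h1 h2 hnonneg
  -- some ⟨e, β'^∨⟩ is positive
  have hex : ∃ e ∈ K, 0 < P.pairInt e β' := by
    by_contra hcon
    push_neg at hcon
    have hzero : ∀ e ∈ K, P.pairInt e β' = 0 := fun e he =>
      le_antisymm (hcon e he) (hterm e he)
    have h2 : P.pairInt β' β' = ∑ e ∈ K, (c' e : ℤ) * P.pairInt e β' :=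
      pairInt_sum_formula hbase hK1 hβ'r hβ'r hc'
    rw [P.pair_self β' hβ'r] at h2
    have : ∑ e ∈ K, (c' e : ℤ) * P.pairInt e β' = 0 :=
      Finset.sum_eq_zero fun e he => by rw [hzero e he, mul_zero]
    omega
  have hpos : 0 < P.pairInt β β' := by
    rw [pairInt_sum_formula hbase hK1 hβ'r hβr hc]
    obtain ⟨e₀, he₀, hpe₀⟩ := hex
    apply Finset.sum_pos'
    · intro e he
      exact mul_nonneg (by positivity) (hterm e he)
    · refine ⟨e₀, he₀, ?_⟩
      have hce₀ : 1 ≤ (c e₀ : ℤ) := by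
        have := hsupp e₀ he₀; omega
      nlinarith
  have hsub := sub_mem_of_pairInt_pos hβr hβ'r hpos hne
  have hsubZ : β - β' ∈ AddSubgroup.closure (K : Set V) :=
    AddSubgroup.sub_mem _ (closureN_le_closureZ hβN) (closureN_le_closureZ hβ'N)
  have hsubK : β - β' ∈ P.rootsOf K := Finset.mem_filter.mpr ⟨hsub, hsubZ⟩
  rcases posneg_of_rootsOf hbase hK1 hsubK with h | h
  · exact hne (hmaxβ' β hβ h)
  · rw [neg_sub] at h
    exact hne (hmaxβ β' hβ' h).symm

lemma exists_max_in (hK1 : K ⊆ Δ) (U : Finset V) (hU : U ⊆ P.posRootsOf K)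
    (hne : U.Nonempty)
    (hup : ∀ γ ∈ P.posRootsOf K, ∀ δ ∈ U, γ - δ ∈ AddSubmonoid.closure (K : Set V) → γ ∈ U) :
    ∃ ε ∈ U, ∀ γ ∈ P.posRootsOf K, γ - ε ∈ AddSubmonoid.closure (K : Set V) → γ = ε := by
  obtain ⟨ε, hεU, hmax⟩ := Finset.exists_max_image U (htK K) hne
  refine ⟨ε, hεU, fun γ hγ hd => ?_⟩
  have hγU := hup γ hγ ε hεU hd
  have hεN : ε ∈ AddSubmonoid.closure (K : Set V) := (Finset.mem_filter.mp (hU hεU)).2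
  exact eq_of_sub_mem_of_ht_le hbase hK1 hεN hd (hmax γ hγU)

theorem exists_isHighestRoot (hK1 : K ⊆ Δ) (hK2 : K.Nonempty)
    (hconn : ∀ T ⊆ K, T.Nonempty → (∀ b ∈ T, ∀ a ∈ K \ T, P.pairInt b a = 0) → T = K) :
    ∃ ε, P.IsHighestRoot K ε := by
  classical
  have hKpos : K ⊆ P.posRootsOf K := by
    intro a ha
    exact Finset.mem_filter.mpr ⟨hbase.subset (hK1 ha), AddSubmonoid.subset_closure ha⟩
  have hposne : (P.posRootsOf K).Nonempty := hK2.mono hKpos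
  obtain ⟨ε, hεpos, hmax⟩ := exists_max_in hbase hK1 (P.posRootsOf K)
    (Finset.Subset.refl _) hposne (fun γ hγ _ _ _ => hγ)
  have hdom : ∀ γ ∈ P.posRootsOf K, ε - γ ∈ AddSubmonoid.closure (K : Set V) := by
    intro γ hγ
    set U := (P.posRootsOf K).filter
      (fun δ => δ - γ ∈ AddSubmonoid.closure (K : Set V)) with hUdef
    have hγU : γ ∈ U := Finset.mem_filter.mpr ⟨hγ, by simpa using
      (AddSubmonoid.zero_mem (AddSubmonoid.closure (K : Set V)))⟩
    have hup : ∀ γ' ∈ P.posRootsOf K, ∀ δ ∈ U,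
        γ' - δ ∈ AddSubmonoid.closure (K : Set V) → γ' ∈ U := by
      intro γ' hγ' δ hδ hmem
      obtain ⟨hδpos, hδγ⟩ := Finset.mem_filter.mp hδ
      refine Finset.mem_filter.mpr ⟨hγ', ?_⟩
      have : γ' - γ = (γ' - δ) + (δ - γ) := by abel
      rw [this]
      exact AddSubmonoid.add_mem _ hmem hδγ
    obtain ⟨δs, hδsU, hδsmax⟩ := exists_max_in hbase hK1 U (Finset.filter_subset _ _)
      ⟨γ, hγU⟩ hup
    have hδseq : δs = ε :=
      max_unique hbase hK1 hconn (Finset.filter_subset _ _ hδsU) hδsmax hεpos hmax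
    have := (Finset.mem_filter.mp hδsU).2
    rwa [hδseq] at this
  refine ⟨ε, hεpos, ?_⟩
  intro α hα
  rcases posneg_of_rootsOf hbase hK1 hα with h | h
  · exact hdom α (Finset.mem_filter.mpr ⟨(Finset.mem_filter.mp hα).1, h⟩)
  · have hεN : ε ∈ AddSubmonoid.closure (K : Set V) := (Finset.mem_filter.mp hεpos).2
    have : ε - α = ε + (-α) := by abel
    rw [this]
    exact AddSubmonoid.add_mem _ hεN h

end Highest
section Cascade

variable {k V : Type*} [Field k] [CharZero k] [AddCommGroup V] [Module k V]
variable {P : RootSystemData k V} {Δ : Finset V} (hbase : P.IsBase Δ)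

lemma self_mem_component {S : Finset V} {a : V} (ha : a ∈ S) :
    a ∈ P.component S a :=
  Finset.mem_filter.mpr ⟨ha, Relation.ReflTransGen.refl⟩

lemma mem_cascadeAux {P : RootSystemData k V} :
    ∀ (n : ℕ) (S K : Finset V), K ∈ P.cascadeAux n S →
      ∃ S' a, S' ⊆ S ∧ a ∈ S' ∧ K = P.component S' a := by
  intro n
  induction n with
  | zero => intro S K h; simp [cascadeAux] at h
  | succ n ih =>
    intro S K h
    rw [cascadeAux] at h
    obtain ⟨C, hC, hK⟩ := Finset.mem_biUnion.mp h
    obtain ⟨a, haS, hCa⟩ := Finset.mem_image.mp hC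
    rcases Finset.mem_insert.mp hK with rfl | hK'
    · exact ⟨S, a, Finset.Subset.refl S, haS, hCa.symm⟩
    · obtain ⟨S', b, hS'sub, hb, hKeq⟩ := ih _ _ hK'
      refine ⟨S', b, ?_, hb, hKeq⟩
      calc S' ⊆ P.zeroPart C := hS'sub
        _ ⊆ C := Finset.filter_subset _ _
        _ ⊆ S := by rw [← hCa]; exact Finset.filter_subset _ _

lemma component_closure {S : Finset V} {a : V} (ha : a ∈ S) (U : Finset V) (haU : a ∈ U)
    (hclosed : ∀ b ∈ U, ∀ e ∈ P.component S a, P.pairInt b e ≠ 0 → e ∈ U) :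
    P.component S a ⊆ U := by
  intro x hx
  obtain ⟨hxS, hlink⟩ := Finset.mem_filter.mp hx
  have key : ∀ {x : V}, P.Linked S a x → x ∈ P.component S a ∧ x ∈ U := by
    intro x h
    induction h with
    | refl => exact ⟨self_mem_component ha, haU⟩
    | tail hab hbc ih =>
      obtain ⟨hbS, hcS, hpair⟩ := hbc
      have hcomp : _ ∈ P.component S a :=
        Finset.mem_filter.mpr ⟨hcS, Relation.ReflTransGen.tail hab ⟨hbS, hcS, hpair⟩⟩
      exact ⟨hcomp, hclosed _ ih.2 _ hcomp hpair⟩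
  exact (key hlink).2

include hbase

lemma component_conn {S : Finset V} (hS : S ⊆ Δ) {a : V} (ha : a ∈ S) :
    ∀ T ⊆ P.component S a, T.Nonempty →
      (∀ b ∈ T, ∀ e ∈ P.component S a \ T, P.pairInt b e = 0) →
      T = P.component S a := by
  intro T hTK hTne hcross
  have hcompΔ : P.component S a ⊆ Δ := (Finset.filter_subset _ _).trans hS
  have haK : a ∈ P.component S a := self_mem_component ha
  by_cases haT : a ∈ T
  · refine Finset.Subset.antisymm hTK (component_closure ha T haT ?_)
    intro b hb e he hpair
    by_contra heT
    exact hpair (hcross b hb e (Finset.mem_sdiff.mpr ⟨he, heT⟩))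
  · exfalso
    have hsub := component_closure (P := P) ha (P.component S a \ T)
      (Finset.mem_sdiff.mpr ⟨haK, haT⟩) ?_
    · obtain ⟨t, ht⟩ := hTne
      have := hsub (hTK ht)
      exact (Finset.mem_sdiff.mp this).2 ht
    · intro b hb e he hpair
      refine Finset.mem_sdiff.mpr ⟨he, fun heT => ?_⟩
      have h0 := hcross e heT b hb
      obtain ⟨hbK, _⟩ := Finset.mem_sdiff.mp hb
      have her : e ∈ P.roots := hbase.subset (hcompΔ he)
      have hbr : b ∈ P.roots := hbase.subset (hcompΔ hbK)
      have hne1 : e ≠ b := by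
        rintro rfl
        exact (Finset.mem_sdiff.mp hb).2 heT
      have hne2 : e ≠ -b := ne_neg_of_base hbase (hcompΔ he) (hcompΔ hbK)
      exact hpair (pairInt_zero_symm her hbr hne1 hne2 h0)

lemma isHighestRoot_highestRoot {K : Finset V} (h : ∃ ε, P.IsHighestRoot K ε) :
    P.IsHighestRoot K (P.highestRoot K) := by
  rw [highestRoot, dif_pos h]
  exact h.choose_spec

end Cascade

end Aux

end RootSystemData

/-- Let `R` be a reduced root system with base `Π`, let `𝒦 = 𝒦(Π)` be the
cascade, and let `K ∈ 𝒦`.  If `α, β ∈ Γ^K` and `α + β ∈ R`, then `α + β = ε_K`. -/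
theorem gamma_add_eq_highestRoot
    (P : RootSystemData k V) (Δ : Finset V) (hbase : P.IsBase Δ)
    (K : Finset V) (hK : K ∈ P.cascade Δ)
    (α : V) (hα : α ∈ P.gamma K) (β : V) (hβ : β ∈ P.gamma K)
    (hsum : α + β ∈ P.roots) :
    α + β = P.highestRoot K := by
  classical
  obtain ⟨S', a, hS'Δ, ha, hKeq⟩ := RootSystemData.mem_cascadeAux _ _ _ hK
  have hK1 : K ⊆ Δ := by
    rw [hKeq]
    exact (Finset.filter_subset _ _).trans hS'Δ
  have hK2 : K.Nonempty := ⟨a, by rw [hKeq]; exact RootSystemData.self_mem_component ha⟩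
  have hconn : ∀ T ⊆ K, T.Nonempty → (∀ b ∈ T, ∀ e ∈ K \ T, P.pairInt b e = 0) → T = K := by
    rw [hKeq]
    exact RootSystemData.component_conn hbase hS'Δ ha
  have hex := RootSystemData.exists_isHighestRoot hbase hK1 hK2 hconn
  have hHR := RootSystemData.isHighestRoot_highestRoot hbase hex
  set ε := P.highestRoot K with hεdef
  obtain ⟨hεpos, hεdom⟩ := hHR
  obtain ⟨hεr, hεN⟩ := Finset.mem_filter.mp hεpos
  obtain ⟨hαK, hαpos⟩ := Finset.mem_filter.mp hα
  obtain ⟨hβK, hβpos⟩ := Finset.mem_filter.mp hβ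
  obtain ⟨hαr, hαZ⟩ := Finset.mem_filter.mp hαK
  obtain ⟨hβr, hβZ⟩ := Finset.mem_filter.mp hβK
  have hγZ : α + β ∈ AddSubgroup.closure (K : Set V) := AddSubgroup.add_mem _ hαZ hβZ
  have hγK : α + β ∈ P.rootsOf K := Finset.mem_filter.mpr ⟨hsum, hγZ⟩
  set c : ℤ := P.pairInt (α + β) ε with hcdef
  have hck : ((c : ℤ) : k) = ((P.pairInt α ε + P.pairInt β ε : ℤ) : k) := by
    rw [hcdef, P.pair_compat ε hεr _ hsum, map_add,
      ← P.pair_compat ε hεr α hαr, ← P.pair_compat ε hεr β hβr]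
    push_cast
    ring
  have hc2 : 2 ≤ c := by
    have h : c = P.pairInt α ε + P.pairInt β ε := by exact_mod_cast hck
    rw [hεdef] at h
    omega
  have hδ : α + β - c • ε ∈ P.roots := P.reflect_mem ε hεr (α + β) hsum
  have hmδ : c • ε - (α + β) ∈ P.roots := by
    have := RootSystemData.neg_mem hδ
    rwa [neg_sub] at this
  have hεZ := RootSystemData.closureN_le_closureZ hεN
  have hmδZ : c • ε - (α + β) ∈ AddSubgroup.closure (K : Set V) :=
    AddSubgroup.sub_mem _ (AddSubgroup.zsmul_mem _ hεZ c) hγZ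
  have h1 := hεdom _ (Finset.mem_filter.mpr ⟨hmδ, hmδZ⟩)
  have h2 := hεdom _ hγK
  have h3 : (c - 2).toNat • ε ∈ AddSubmonoid.closure (K : Set V) :=
    AddSubmonoid.nsmul_mem _ hεN _
  have heq : -(ε - (α + β)) = (ε - (c • ε - (α + β))) + (c - 2).toNat • ε := by
    have hcast : ((c - 2).toNat • ε : V) = (c - 2) • ε := by
      rw [← natCast_zsmul, Int.toNat_of_nonneg (by omega)]
    rw [hcast, sub_smul]
    have h2ε : (2 : ℤ) • ε = ε + ε := two_zsmul ε
    rw [h2ε]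
    abel
  have h4 : -(ε - (α + β)) ∈ AddSubmonoid.closure (K : Set V) := by
    rw [heq]
    exact AddSubmonoid.add_mem _ h1 h3
  have h5 := RootSystemData.eq_zero_of_mem_neg_mem hbase hK1 h2 h4
  have := sub_eq_zero.mp h5
  exact this.symm
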